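/- For every integer n ≥ 2, the function F(φ) = ∑_{k=0}^{2n+1} (sin(kπ/(n+1) + φ))^{2n} is constant in φ. -/

import Mathlib

open Complex Finset

private lemma sinpow_aux (n : ℕ) (z : ℂ) :
    Complex.sin z ^ (2 * n) * (2 * I) ^ (2 * n) =
      ∑ j ∈ range (2 * n + 1),
        (-1) ^ (j + 2 * n) * Complex.exp ((2 * (j : ℤ) - 2 * n) * z * I) *
          ((2 * n).choose j : ℂ) := by
  have h : Complex.sin z * (2 * I) = Complex.exp (z * I) - Complex.exp (-z * I) := by
    rw [Complex.sin]
    have hI : I * I = -1 := Complex.I_mul_I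
    field_simp
    ring_nf
    rw [Complex.I_sq]
    ring
  calc Complex.sin z ^ (2 * n) * (2 * I) ^ (2 * n)
      = (Complex.sin z * (2 * I)) ^ (2 * n) := by ring
    _ = (Complex.exp (z * I) - Complex.exp (-z * I)) ^ (2 * n) := by rw [h]
    _ = ∑ j ∈ range (2 * n + 1),
          (-1) ^ (j + 2 * n) * Complex.exp (z * I) ^ j * Complex.exp (-z * I) ^ (2 * n - j) *
            ((2 * n).choose j : ℂ) := sub_pow _ _ _
    _ = _ := by
        refine Finset.sum_congr rfl fun j hj => ?_
        have hj' : j ≤ 2 * n := by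
          have := Finset.mem_range.mp hj; omega
        rw [← Complex.exp_nat_mul, ← Complex.exp_nat_mul]
        have hAB : Complex.exp ((j : ℂ) * (z * I)) * Complex.exp (((2 * n - j : ℕ) : ℂ) * (-z * I))
            = Complex.exp (((2 * (j : ℤ) - 2 * n) : ℂ) * z * I) := by
          rw [← Complex.exp_add]
          congr 1
          push_cast [hj']
          ring
        linear_combination ((-1 : ℂ) ^ (j + 2 * n) * ((2 * n).choose j : ℂ)) * hAB

private lemma geomsum_aux (n : ℕ) (j : ℕ) (hj : j < 2 * n + 1) (hne : j ≠ n) :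
    ∑ k ∈ range (2 * n + 2),
      Complex.exp ((2 * (j : ℤ) - 2 * n) * ((k : ℂ) * (Real.pi : ℂ) / ((n : ℂ) + 1)) * I) = 0 := by
  set r : ℂ := Complex.exp ((2 * (j : ℤ) - 2 * n) * ((Real.pi : ℂ) / ((n : ℂ) + 1)) * I) with hr
  have hterm : ∀ k : ℕ,
      Complex.exp ((2 * (j : ℤ) - 2 * n) * ((k : ℂ) * (Real.pi : ℂ) / ((n : ℂ) + 1)) * I)
        = r ^ k := by
    intro k
    rw [hr, ← Complex.exp_nat_mul]
    congr 1
    ring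
  have hrne : r ≠ 1 := by
    intro h1
    rw [hr, Complex.exp_eq_one_iff] at h1
    obtain ⟨m, hm⟩ := h1
    have hI : (I : ℂ) ≠ 0 := Complex.I_ne_zero
    have hm2 : ((2 * ((j : ℤ) : ℂ) - 2 * (n : ℂ)) * ((Real.pi : ℂ) / ((n : ℂ) + 1))
        - (m : ℂ) * (2 * Real.pi)) * I = 0 := by linear_combination hm
    have hm' : (2 * ((j : ℤ) : ℂ) - 2 * (n : ℂ)) * ((Real.pi : ℂ) / ((n : ℂ) + 1)) = (m : ℂ) * (2 * Real.pi) := by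
      rcases mul_eq_zero.mp hm2 with h | h
      · linear_combination h
      · exact absurd h hI
    -- convert to a real equation
    have hre : ((2 * (j : ℝ) - 2 * n) : ℝ) * (Real.pi / ((n : ℝ) + 1)) = (m : ℝ) * (2 * Real.pi) := by
      have := hm'
      push_cast at this
      exact_mod_cast this
    have hn1 : ((n : ℝ) + 1) ≠ 0 := by positivity
    have hπ : (Real.pi : ℝ) ≠ 0 := Real.pi_ne_zero
    have hint : (2 * (j : ℝ) - 2 * n) = (m : ℝ) * (2 * ((n : ℝ) + 1)) := by
      field_simp at hre
      nlinarith [hre, Real.pi_pos]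
    have hz : 2 * (j : ℤ) - 2 * n = m * (2 * ((n : ℤ) + 1)) := by exact_mod_cast hint
    have hjz : (j : ℤ) - n = m * ((n : ℤ) + 1) := by linarith
    rcases lt_trichotomy m 0 with h0 | h0 | h0
    · have : m ≤ -1 := by omega
      have : m * ((n : ℤ) + 1) ≤ -1 * ((n : ℤ) + 1) := by
        apply mul_le_mul_of_nonneg_right this (by positivity)
      have hjb : (0 : ℤ) ≤ (j : ℤ) := Int.natCast_nonneg j
      omega
    · subst h0; simp at hjz; omega
    · have : 1 ≤ m := by omega
      have : 1 * ((n : ℤ) + 1) ≤ m * ((n : ℤ) + 1) := by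
        apply mul_le_mul_of_nonneg_right this (by positivity)
      have hjb : (j : ℤ) ≤ 2 * n := by exact_mod_cast (by omega : j ≤ 2 * n)
      omega
  have hrN : r ^ (2 * n + 2) = 1 := by
    rw [hr, ← Complex.exp_nat_mul]
    have : ((2 * n + 2 : ℕ) : ℂ) * (((2 * (j : ℤ) - 2 * n) : ℂ) * ((Real.pi : ℂ) / ((n : ℂ) + 1)) * I)
        = ((2 * ((j : ℤ) - n) : ℤ) : ℂ) * (2 * Real.pi * I) := by
      have hn1 : ((n : ℂ) + 1) ≠ 0 := by
        intro h
        have : ((n : ℂ) + 1) = ((n + 1 : ℕ) : ℂ) := by push_cast; ring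
        rw [this] at h
        exact_mod_cast h
      field_simp
      push_cast
      ring
    rw [this, Complex.exp_int_mul_two_pi_mul_I]
  calc ∑ k ∈ range (2 * n + 2),
        Complex.exp ((2 * (j : ℤ) - 2 * n) * ((k : ℂ) * (Real.pi : ℂ) / ((n : ℂ) + 1)) * I)
      = ∑ k ∈ range (2 * n + 2), r ^ k := Finset.sum_congr rfl fun k _ => hterm k
    _ = (r ^ (2 * n + 2) - 1) / (r - 1) := geom_sum_eq hrne _
    _ = 0 := by rw [hrN]; simp

private lemma key_aux (n : ℕ) (φ : ℝ) :
    (∑ k ∈ range (2 * n + 2),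
        Complex.sin ((k : ℂ) * (Real.pi : ℂ) / ((n : ℂ) + 1) + (φ : ℂ)) ^ (2 * n)) * (2 * I) ^ (2 * n)
      = (-1) ^ (n + 2 * n) * ((2 * n).choose n : ℂ) * (2 * n + 2) := by
  rw [Finset.sum_mul]
  have h1 : ∀ k ∈ range (2 * n + 2),
      Complex.sin ((k : ℂ) * (Real.pi : ℂ) / ((n : ℂ) + 1) + (φ : ℂ)) ^ (2 * n) * (2 * I) ^ (2 * n)
        = ∑ j ∈ range (2 * n + 1),
            (-1) ^ (j + 2 * n) * ((2 * n).choose j : ℂ) *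
              Complex.exp ((2 * (j : ℤ) - 2 * n) * (φ : ℂ) * I) *
              Complex.exp ((2 * (j : ℤ) - 2 * n) * ((k : ℂ) * (Real.pi : ℂ) / ((n : ℂ) + 1)) * I) := by
    intro k _
    rw [sinpow_aux]
    refine Finset.sum_congr rfl fun j hj => ?_
    have hsplit : ((2 * (j : ℤ) - 2 * n) : ℂ) * ((k : ℂ) * (Real.pi : ℂ) / ((n : ℂ) + 1) + (φ : ℂ)) * I
        = ((2 * (j : ℤ) - 2 * n) : ℂ) * (φ : ℂ) * I
          + ((2 * (j : ℤ) - 2 * n) : ℂ) * ((k : ℂ) * (Real.pi : ℂ) / ((n : ℂ) + 1)) * I := by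
      ring
    rw [hsplit, Complex.exp_add]
    ring
  rw [Finset.sum_congr rfl h1, Finset.sum_comm]
  rw [Finset.sum_eq_single n]
  · have e0 : (2 * (((n : ℤ)) : ℂ) - 2 * ((n : ℕ) : ℂ)) = 0 := by push_cast; ring
    simp only [e0, zero_mul, Complex.exp_zero, mul_one, Finset.sum_const, Finset.card_range,
      nsmul_eq_mul]
    push_cast
    ring
  · intro j hj hne
    have hj' : j < 2 * n + 1 := Finset.mem_range.mp hj
    have : ∀ k ∈ range (2 * n + 2),
        (-1) ^ (j + 2 * n) * ((2 * n).choose j : ℂ) *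
            Complex.exp ((2 * (j : ℤ) - 2 * n) * (φ : ℂ) * I) *
            Complex.exp ((2 * (j : ℤ) - 2 * n) * ((k : ℂ) * (Real.pi : ℂ) / ((n : ℂ) + 1)) * I)
          = (-1) ^ (j + 2 * n) * ((2 * n).choose j : ℂ) *
              Complex.exp ((2 * (j : ℤ) - 2 * n) * (φ : ℂ) * I) *
              Complex.exp ((2 * (j : ℤ) - 2 * n) * ((k : ℂ) * (Real.pi : ℂ) / ((n : ℂ) + 1)) * I) :=
      fun k _ => rfl
    rw [← Finset.mul_sum, geomsum_aux n j hj' hne, mul_zero]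
  · intro h
    exact absurd (Finset.mem_range.mpr (by omega)) h

theorem stmt_8 (n : ℕ) (hn : 2 ≤ n) (φ ψ : ℝ) :
    ∑ k ∈ Finset.range (2 * n + 2), Real.sin ((k : ℝ) * Real.pi / (n + 1) + φ) ^ (2 * n)
      = ∑ k ∈ Finset.range (2 * n + 2), Real.sin ((k : ℝ) * Real.pi / (n + 1) + ψ) ^ (2 * n) := by
  have hne : ((2 : ℂ) * I) ^ (2 * n) ≠ 0 := by
    apply pow_ne_zero
    simp [Complex.I_ne_zero]
  have hc : (∑ k ∈ range (2 * n + 2),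
        Complex.sin ((k : ℂ) * (Real.pi : ℂ) / ((n : ℂ) + 1) + (φ : ℂ)) ^ (2 * n))
      = ∑ k ∈ range (2 * n + 2),
        Complex.sin ((k : ℂ) * (Real.pi : ℂ) / ((n : ℂ) + 1) + (ψ : ℂ)) ^ (2 * n) :=
    mul_right_cancel₀ hne ((key_aux n φ).trans (key_aux n ψ).symm)
  have := hc
  push_cast [← Complex.ofReal_sin] at this
  exact_mod_cast this
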